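/- arXiv:1609.01276 — 2 statements merged into one kernel-verified Lean document; each statement's English description precedes it below -/
import Mathlib

section
/- (Stone–von Neumann–Mackey) Let ψ be a nontrivial character of (F_q, +). Then: (i) there exists an irreducible complex representation of the Heisenberg group H with central character ψ; (ii) any two irreducible complex representations of H with central character ψ are isomorphic; (iii) every irreducible complex representation of H with central character ψ has dimension q^n. -/
open Matrix
open scoped Kronecker

/-- The subgroup of invertible matrices `g` preserving the bilinear form with
matrix `M`, i.e. satisfying `gᵀ * M * g = M`. -/
def matIsom (F : Type) [Field F] (ι : Type) [Fintype ι] [DecidableEq ι]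
    (M : Matrix ι ι F) : Subgroup (Matrix ι ι F)ˣ where
  carrier := {g | (g : Matrix ι ι F)ᵀ * M * g = M}
  one_mem' := by simp
  mul_mem' := by
    intro a b ha hb
    simp only [Set.mem_setOf_eq, Units.val_mul, transpose_mul] at *
    calc (b : Matrix ι ι F)ᵀ * (a : Matrix ι ι F)ᵀ * M * ((a : Matrix ι ι F) * b)
        = (b : Matrix ι ι F)ᵀ * ((a : Matrix ι ι F)ᵀ * M * a) * b := by
          simp only [Matrix.mul_assoc]
      _ = M := by rw [ha, hb]
  inv_mem' := by
    intro a ha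
    simp only [Set.mem_setOf_eq] at *
    set b : Matrix ι ι F := ↑a⁻¹ with hb
    have h1 : (a : Matrix ι ι F) * b = 1 := by
      rw [hb, ← Units.val_mul, mul_inv_cancel, Units.val_one]
    calc bᵀ * M * b = bᵀ * ((a : Matrix ι ι F)ᵀ * M * a) * b := by rw [ha]
      _ = ((a : Matrix ι ι F) * b)ᵀ * M * ((a : Matrix ι ι F) * b) := by
          simp only [transpose_mul, Matrix.mul_assoc]
      _ = M := by rw [h1]; simp

/-- The matrix of the standard symplectic form on `F^(2n)`. -/
def Jmat (F : Type) [Field F] (n : ℕ) : Matrix (Fin n ⊕ Fin n) (Fin n ⊕ Fin n) F :=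
  fromBlocks 0 1 (-1) 0

/-- The symplectic group `Sp_{2n}(F)`: matrices with `gᵀ J g = J`. -/
abbrev Sp (F : Type) [Field F] (n : ℕ) : Subgroup (Matrix (Fin n ⊕ Fin n) (Fin n ⊕ Fin n) F)ˣ :=
  matIsom F (Fin n ⊕ Fin n) (Jmat F n)

/-- The invertible matrix `[[1, A], [0, 1]]`. -/
def shearUnit (F : Type) [Field F] (n : ℕ) (A : Matrix (Fin n) (Fin n) F) :
    (Matrix (Fin n ⊕ Fin n) (Fin n ⊕ Fin n) F)ˣ where
  val := fromBlocks 1 A 0 1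
  inv := fromBlocks 1 (-A) 0 1
  val_inv := by
    rw [fromBlocks_multiply, ← fromBlocks_one (l := Fin n) (m := Fin n)]
    simp
  inv_val := by
    rw [fromBlocks_multiply, ← fromBlocks_one (l := Fin n) (m := Fin n)]
    simp

lemma shearUnit_mem (F : Type) [Field F] (n : ℕ) (A : Matrix (Fin n) (Fin n) F)
    (hA : A.IsSymm) : shearUnit F n A ∈ Sp F n := by
  show (fromBlocks 1 A 0 1 : Matrix (Fin n ⊕ Fin n) (Fin n ⊕ Fin n) F)ᵀ * Jmat F n
      * fromBlocks 1 A 0 1 = Jmat F n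
  have := hA.eq
  simp [Jmat, fromBlocks_transpose, fromBlocks_multiply, this]

/-- The element `n_A = [[1, A], [0, 1]]` of the Siegel unipotent radical of `Sp_{2n}(F)`,
for a symmetric matrix `A`. -/
def nUnip (F : Type) [Field F] (n : ℕ) (A : Matrix (Fin n) (Fin n) F) (hA : A.IsSymm) :
    ↥(Sp F n) :=
  ⟨shearUnit F n A, shearUnit_mem F n A hA⟩

/-- A representation is irreducible if the space is nonzero and the only invariant
subspaces are `⊥` and `⊤`. -/
def IsIrredRep {G : Type} [Monoid G] {W : Type} [AddCommGroup W] [Module ℂ W]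
    (ρ : Representation ℂ G W) : Prop :=
  Nontrivial W ∧ ∀ p : Submodule ℂ W, (∀ g : G, ∀ w ∈ p, ρ g w ∈ p) → p = ⊥ ∨ p = ⊤

/-- Isomorphism of representations. -/
def RepIso {G : Type} [Monoid G] {W₁ W₂ : Type} [AddCommGroup W₁] [Module ℂ W₁]
    [AddCommGroup W₂] [Module ℂ W₂]
    (ρ₁ : Representation ℂ G W₁) (ρ₂ : Representation ℂ G W₂) : Prop :=
  ∃ e : W₁ ≃ₗ[ℂ] W₂, ∀ (g : G) (w : W₁), e (ρ₁ g w) = ρ₂ g (e w)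

/-- The multiplicity `m_B(ρ)` of the character `ψ_B : n_A ↦ ψ(Tr(B * A))` of the Siegel
unipotent radical `N` in the restriction of `ρ` to `N`. -/
noncomputable def multB {F : Type} [Field F] {n : ℕ} {W : Type} [AddCommGroup W] [Module ℂ W]
    (ρ : Representation ℂ (↥(Sp F n)) W) (ψ : AddChar F ℂ) (B : Matrix (Fin n) (Fin n) F) : ℕ :=
  Module.finrank ℂ
    ↥(⨅ A : {A : Matrix (Fin n) (Fin n) F // A.IsSymm},
      Module.End.eigenspace (ρ (nUnip F n A.1 A.2)) (ψ (Matrix.trace (B * A.1))))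

/-- Congruence of matrices: `B'` is obtained from `B` by the change-of-basis action of
an invertible matrix. -/
def MatCongruent {F : Type} [Field F] {n : ℕ} (B B' : Matrix (Fin n) (Fin n) F) : Prop :=
  ∃ C : (Matrix (Fin n) (Fin n) F)ˣ, B' = (C : Matrix (Fin n) (Fin n) F)ᵀ * B * C

/-- A bundled complex representation of `G` (on an arbitrary complex vector space). -/
structure CRep (G : Type) [Monoid G] : Type 1 where
  carrier : Type
  [acg : AddCommGroup carrier]
  [mod : Module ℂ carrier]
  ρ : Representation ℂ G carrier

attribute [instance] CRep.acg CRep.mod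

/-- The Heisenberg group attached to the bilinear form with matrix `M` on `ι → F`:
the set `(ι → F) × F` with the Heisenberg multiplication. -/
def Heis (F : Type) [Field F] (ι : Type) [Fintype ι] (M : Matrix ι ι F) : Type :=
  (ι → F) × F

namespace Heis

variable {F : Type} [Field F] {ι : Type} [Fintype ι] {M : Matrix ι ι F}

instance : Group (Heis F ι M) where
  mul a b := (a.1 + b.1, a.2 + b.2 + (2 : F)⁻¹ * (a.1 ⬝ᵥ (M *ᵥ b.1)))
  one := ((0 : ι → F), (0 : F))
  inv a := (-a.1, -a.2 + (2 : F)⁻¹ * (a.1 ⬝ᵥ (M *ᵥ a.1)))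
  mul_assoc a b c := by
    refine Prod.ext ?_ ?_
    · show (a.1 + b.1) + c.1 = a.1 + (b.1 + c.1)
      rw [add_assoc]
    · show a.2 + b.2 + 2⁻¹ * (a.1 ⬝ᵥ M *ᵥ b.1) + c.2
          + 2⁻¹ * ((a.1 + b.1) ⬝ᵥ M *ᵥ c.1)
        = a.2 + (b.2 + c.2 + 2⁻¹ * (b.1 ⬝ᵥ M *ᵥ c.1))
          + 2⁻¹ * (a.1 ⬝ᵥ M *ᵥ (b.1 + c.1))
      simp only [add_dotProduct, Matrix.mulVec_add, dotProduct_add]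
      ring
  one_mul a := by
    refine Prod.ext ?_ ?_
    · show (0 : ι → F) + a.1 = a.1
      simp
    · show 0 + a.2 + 2⁻¹ * ((0 : ι → F) ⬝ᵥ M *ᵥ a.1) = a.2
      simp
  mul_one a := by
    refine Prod.ext ?_ ?_
    · show a.1 + (0 : ι → F) = a.1
      simp
    · show a.2 + 0 + 2⁻¹ * (a.1 ⬝ᵥ M *ᵥ (0 : ι → F)) = a.2
      simp
  inv_mul_cancel a := by
    refine Prod.ext ?_ ?_
    · show -a.1 + a.1 = (0 : ι → F)
      simp
    · show -a.2 + 2⁻¹ * (a.1 ⬝ᵥ M *ᵥ a.1) + a.2 + 2⁻¹ * ((-a.1) ⬝ᵥ M *ᵥ a.1) = 0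
      simp only [neg_dotProduct]
      ring

end Heis

/-- The action of an invertible matrix `g` on the Heisenberg group: `g ⋅ (v, z) = (g v, z)`. -/
def heisAct {F : Type} [Field F] {ι : Type} [Fintype ι] {M : Matrix ι ι F}
    (g : Matrix ι ι F) (h : Heis F ι M) : Heis F ι M :=
  (g *ᵥ h.1, h.2)

/-- `π` has central character `ψ`, i.e. `π (0, z) = ψ z • 1`. -/
def HasCentralChar {F : Type} [Field F] {ι : Type} [Fintype ι] {M : Matrix ι ι F}
    {W : Type} [AddCommGroup W] [Module ℂ W]
    (π : Representation ℂ (Heis F ι M) W) (ψ : AddChar F ℂ) : Prop :=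
  ∀ z : F, π ((0, z) : Heis F ι M) = ψ z • (1 : W →ₗ[ℂ] W)

/-- `ω : Sp → GL(W)` is an oscillator representation for `π`: it satisfies the
Egorov identity `ω g ∘ π h ∘ (ω g)⁻¹ = π (g ⋅ h)`. -/
def IsOscillator {F : Type} [Field F] {ι : Type} [Fintype ι] [DecidableEq ι]
    {M : Matrix ι ι F} {W : Type} [AddCommGroup W] [Module ℂ W]
    (π : Representation ℂ (Heis F ι M) W)
    (ω : ↥(matIsom F ι M) →* (W →ₗ[ℂ] W)ˣ) : Prop :=
  ∀ (g : ↥(matIsom F ι M)) (h : Heis F ι M),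
    (ω g : W →ₗ[ℂ] W) * π h * ((ω g)⁻¹ : (W →ₗ[ℂ] W)ˣ)
      = π (heisAct ((g : (Matrix ι ι F)ˣ) : Matrix ι ι F) h)

/-- Convert a homomorphism to `GL(W)` into a representation on `W`. -/
def toRep {G : Type} [Monoid G] {W : Type} [AddCommGroup W] [Module ℂ W]
    (ω : G →* (W →ₗ[ℂ] W)ˣ) : Representation ℂ G W :=
  (Units.coeHom (W →ₗ[ℂ] W)).comp ω



-- ######################################################################
-- Auxiliary material for the proof
-- ######################################################################

section AuxGeneric

variable {G : Type} [Monoid G] {W : Type} [AddCommGroup W] [Module ℂ W]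

/-- Subrepresentation on an invariant submodule. -/
def subRep (ρ : Representation ℂ G W) (p : Submodule ℂ W)
    (hp : ∀ g : G, ∀ w ∈ p, ρ g w ∈ p) : Representation ℂ G p where
  toFun g := (ρ g).restrict (fun w hw => hp g w hw)
  map_one' := by ext x; simp
  map_mul' g h := by ext x; simp [LinearMap.restrict_apply]

lemma finiteDimensional_of_isIrredRep [Fintype G] {ρ : Representation ℂ G W}
    (h : IsIrredRep ρ) : FiniteDimensional ℂ W := by
  obtain ⟨hnt, hirr⟩ := h
  obtain ⟨w, hw⟩ := @exists_ne W hnt 0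
  set p := Submodule.span ℂ (Set.range fun g : G => ρ g w) with hp
  have hinv : ∀ g : G, ∀ x ∈ p, ρ g x ∈ p := by
    intro g x hx
    have hmap : p.map (ρ g) ≤ p := by
      rw [hp, Submodule.map_span]
      apply Submodule.span_le.2
      rintro _ ⟨_, ⟨g', rfl⟩, rfl⟩
      exact Submodule.subset_span ⟨g * g', by simp [_root_.map_mul]⟩
    exact hmap ⟨x, hx, rfl⟩
  have hwp : w ∈ p := by
    refine Submodule.subset_span ⟨1, ?_⟩
    simp
  have hptop : p = ⊤ := by
    rcases hirr p hinv with h' | h'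
    · exact absurd (h' ▸ hwp) (by simpa using hw)
    · exact h'
  have : FiniteDimensional ℂ p := FiniteDimensional.span_of_finite ℂ (Set.finite_range _)
  rw [hptop] at this
  exact Module.Finite.equiv (Submodule.topEquiv)

open CategoryTheory in
lemma simple_of_isIrredRep [FiniteDimensional ℂ W] {ρ : Representation ℂ G W}
    (h : IsIrredRep ρ) : Simple (FDRep.of ρ) := by
  obtain ⟨hnt, hirr⟩ := h
  constructor
  intro Y f hf
  have hcomm : ∀ (g : G) (y : Y), (f.hom.hom.hom : Y →ₗ[ℂ] W) (Y.ρ g y) = ρ g ((f.hom.hom.hom : Y →ₗ[ℂ] W) y) := by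
    intro g y
    exact (congrArg (fun (φ : Y.V ⟶ (FDRep.of ρ).V) => (φ.hom.hom : Y →ₗ[ℂ] W) y) (f.comm g)).symm ▸ rfl
  set φ : Y →ₗ[ℂ] W := (f.hom.hom.hom : Y →ₗ[ℂ] W) with hφ
  have hker : LinearMap.ker φ = ⊥ := by
    set K := LinearMap.ker φ with hK
    have hKinv : ∀ g : G, ∀ y ∈ K, Y.ρ g y ∈ K := by
      intro g y hy
      have hy' : φ y = 0 := hy
      show φ (Y.ρ g y) = 0
      exact (hcomm g y).trans ((congrArg (ρ g) hy').trans (map_zero _))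
    let ι : FDRep.of (subRep Y.ρ K hKinv) ⟶ Y :=
      ⟨(FGModuleCat.ofHom K.subtype : (FDRep.of (subRep Y.ρ K hKinv)).V ⟶ Y.V), by
        intro g; ext x; rfl⟩
    have hι : ι ≫ f = 0 ≫ f := by
      ext x
      show φ (K.subtype _) = φ (0)
      rcases x with ⟨y, hy⟩
      have hy' : φ y = 0 := hy
      simp [hy']
    have hι0 : ι = 0 := (cancel_mono f).mp hι
    rw [hK]
    ext y
    simp only [LinearMap.mem_ker, Submodule.mem_bot]
    constructor
    · intro hy
      have := congrArg (fun (ψ : FDRep.of (subRep Y.ρ K hKinv) ⟶ Y) =>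
        (ψ.hom.hom.hom : (LinearMap.ker φ) →ₗ[ℂ] Y) ⟨y, hy⟩) hι0
      exact this
    · intro hy; rw [hy, map_zero]
  have hRinv : ∀ g : G, ∀ w ∈ LinearMap.range φ, ρ g w ∈ LinearMap.range φ := by
    rintro g w ⟨y, rfl⟩
    exact ⟨Y.ρ g y, hcomm g y⟩
  rcases hirr (LinearMap.range φ) hRinv with hR | hR
  · have hφ0 : ∀ y, φ y = 0 := by
      intro y
      have : φ y ∈ LinearMap.range φ := ⟨y, rfl⟩
      rw [hR] at this
      simpa using this
    have hf0 : f = 0 := by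
      ext y
      show φ y = _
      rw [hφ0 y]
      rfl
    refine iff_of_false ?_ (by simp [hf0])
    intro hiso
    obtain ⟨w, hw⟩ := @exists_ne W hnt 0
    have h1 : inv f ≫ f = 𝟙 (FDRep.of ρ) := IsIso.inv_hom_id f
    have h2 := congrArg (fun (ψ : FDRep.of ρ ⟶ FDRep.of ρ) => (ψ.hom.hom.hom : W →ₗ[ℂ] W) w) h1
    have h3 : φ (((inv f).hom.hom.hom : W →ₗ[ℂ] Y) w) = w := h2
    rw [hφ0] at h3
    exact hw h3.symm
  · have hbij : Function.Bijective φ := by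
      constructor
      · rw [← LinearMap.ker_eq_bot]; exact hker
      · rw [← LinearMap.range_eq_top]; exact hR
    set e := LinearEquiv.ofBijective φ hbij with he
    have hco : ∀ (g : G) (w : W), e.symm (ρ g w) = Y.ρ g (e.symm w) := by
      intro g w
      apply hbij.1
      have h1 : φ (e.symm (ρ g w)) = ρ g w := e.apply_symm_apply (ρ g w)
      have h2 : ρ g (φ (e.symm w)) = ρ g w := congrArg (ρ g) (e.apply_symm_apply w)
      exact h1.trans ((hcomm g (e.symm w)).trans h2).symm
    let ginv : FDRep.of ρ ⟶ Y :=
      ⟨(FGModuleCat.ofHom (e.symm : W →ₗ[ℂ] Y) : (FDRep.of ρ).V ⟶ Y.V), by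
        intro g
        ext w
        exact hco g w⟩
    refine iff_of_true ?_ ?_
    · refine ⟨ginv, ?_, ?_⟩
      · ext y
        show e.symm (φ y) = y
        exact e.symm_apply_apply y
      · ext w
        show φ (e.symm w) = w
        exact e.apply_symm_apply w
    · intro hf0
      obtain ⟨w, hw⟩ := @exists_ne W hnt 0
      obtain ⟨y, hy⟩ := hbij.2 w
      have h0 : φ y = 0 :=
        congrArg (fun (ψ : Y ⟶ FDRep.of ρ) => (ψ.hom.hom.hom : Y →ₗ[ℂ] W) y) hf0
      exact hw (hy.symm.trans h0)

/-- Every nonzero finite-dimensional representation contains an irreducible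
subrepresentation. -/
lemma exists_irred_subrep [FiniteDimensional ℂ W] [Nontrivial W]
    (ρ : Representation ℂ G W) :
    ∃ (p : Submodule ℂ W) (hp : ∀ g : G, ∀ w ∈ p, ρ g w ∈ p),
      IsIrredRep (subRep ρ p hp) := by
  classical
  set S : Set (Submodule ℂ W) := {p | p ≠ ⊥ ∧ ∀ g : G, ∀ w ∈ p, ρ g w ∈ p} with hSdef
  have hS : (⊤ : Submodule ℂ W) ∈ S := ⟨top_ne_bot, fun g w _ => Submodule.mem_top⟩
  set T : Set ℕ := {d | ∃ p ∈ S, Module.finrank ℂ p = d} with hTdef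
  have hT : T.Nonempty := ⟨Module.finrank ℂ (⊤ : Submodule ℂ W), ⊤, hS, rfl⟩
  obtain ⟨p, hpS, hpd⟩ := Nat.sInf_mem hT
  refine ⟨p, hpS.2, ?_, ?_⟩
  · exact (Submodule.nontrivial_iff_ne_bot).mpr hpS.1
  · intro q hq
    by_cases hqbot : q = ⊥
    · exact Or.inl hqbot
    right
    have hmapne : q.map p.subtype ≠ ⊥ := by
      intro h0
      apply hqbot
      ext x
      simp only [Submodule.mem_bot]
      constructor
      · intro hx
        have : (x : W) ∈ q.map p.subtype := ⟨x, hx, rfl⟩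
        rw [h0] at this
        simpa using this
      · intro hx; rw [hx]; exact q.zero_mem
    have hq' : q.map p.subtype ∈ S := by
      refine ⟨hmapne, ?_⟩
      rintro g w ⟨x, hx, rfl⟩
      exact ⟨subRep ρ p hpS.2 g x, hq g x hx, rfl⟩
    have hle : q.map p.subtype ≤ p := by
      rintro w ⟨x, _, rfl⟩
      exact x.2
    have hrank : Module.finrank ℂ p ≤ Module.finrank ℂ (q.map p.subtype) := by
      rw [hpd]
      exact Nat.sInf_le ⟨_, hq', rfl⟩
    have heq : q.map p.subtype = p := Submodule.eq_of_le_of_finrank_le hle hrank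
    have h2 : q.map p.subtype = (⊤ : Submodule ℂ p).map p.subtype := by
      rw [heq, Submodule.map_top, Submodule.range_subtype]
    exact Submodule.map_injective_of_injective p.injective_subtype h2

end AuxGeneric

section AuxHeis

variable {F : Type} [Field F] {ι : Type} [Fintype ι] {M : Matrix ι ι F}

instance heisFintype [Fintype F] [DecidableEq ι] : Fintype (Heis F ι M) :=
  show Fintype ((ι → F) × F) from inferInstance

lemma Heis.mul_def (a b : Heis F ι M) :
    a * b = (a.1 + b.1, a.2 + b.2 + (2 : F)⁻¹ * (a.1 ⬝ᵥ (M *ᵥ b.1))) := rfl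

lemma Heis.inv_def (a : Heis F ι M) :
    a⁻¹ = (-a.1, -a.2 + (2 : F)⁻¹ * (a.1 ⬝ᵥ (M *ᵥ a.1))) := rfl

lemma Heis.central_mul (c : F) (a h : Heis F ι M) (ha : a = ((0 : ι → F), c)) :
    a * h = (h.1, c + h.2) := by
  rw [Heis.mul_def]
  subst ha
  refine Prod.ext (by simp) ?_
  show c + h.2 + (2:F)⁻¹ * ((0 : ι → F) ⬝ᵥ M *ᵥ h.1) = c + h.2
  simp

lemma Heis.central_inv (z : F) (a : Heis F ι M) (ha : a = ((0 : ι → F), z)) :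
    a⁻¹ = ((0 : ι → F), -z) := by
  rw [Heis.inv_def]
  subst ha
  refine Prod.ext (by simp) ?_
  show -z + (2:F)⁻¹ * ((0 : ι → F) ⬝ᵥ M *ᵥ (0 : ι → F)) = -z
  simp

lemma dot_skew (hM : Mᵀ = -M) (x y : ι → F) : y ⬝ᵥ M *ᵥ x = -(x ⬝ᵥ M *ᵥ y) := by
  rw [Matrix.dotProduct_mulVec, ← Matrix.mulVec_transpose, hM, Matrix.neg_mulVec,
    neg_dotProduct, dotProduct_comm]

lemma Heis.conj_eq (h2 : (2 : F) ≠ 0) (hM : Mᵀ = -M) (w v : ι → F) (z : F)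
    (a b : Heis F ι M) (ha : a = (w, (0 : F))) (hb : b = (v, z)) :
    a * b * a⁻¹ = ((v, z + w ⬝ᵥ M *ᵥ v) : Heis F ι M) := by
  rw [Heis.mul_def (a * b) a⁻¹, Heis.mul_def a b, Heis.inv_def a]
  subst ha hb
  refine Prod.ext ?_ ?_
  · show (w + v) + (-w) = v
    abel
  · show (0 + z + 2⁻¹ * (w ⬝ᵥ M *ᵥ v)) + (-0 + 2⁻¹ * (w ⬝ᵥ M *ᵥ w))
        + 2⁻¹ * ((w + v) ⬝ᵥ M *ᵥ (-w)) = z + w ⬝ᵥ M *ᵥ v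
    have hvw : v ⬝ᵥ M *ᵥ w = -(w ⬝ᵥ M *ᵥ v) := dot_skew hM w v
    have hww : w ⬝ᵥ M *ᵥ w = -(w ⬝ᵥ M *ᵥ w) := dot_skew hM w w
    have hww0 : w ⬝ᵥ M *ᵥ w = 0 := by
      have h2' : (2:F) * (w ⬝ᵥ M *ᵥ w) = 0 := by linear_combination hww
      exact (mul_eq_zero.mp h2').resolve_left h2
    simp only [Matrix.mulVec_neg, dotProduct_neg, add_dotProduct, hvw, hww0]
    field_simp
    ring

lemma two_ne_zero_of_odd_card {F : Type} [Field F] [Fintype F]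
    (h : Odd (Fintype.card F)) : (2 : F) ≠ 0 := by
  intro h2
  have hchar : ringChar F = 2 := by
    have hdvd : ringChar F ∣ 2 := ringChar.dvd (by exact_mod_cast h2)
    have h1 : ringChar F ≠ 1 := CharP.ringChar_ne_one
    rcases (Nat.dvd_prime Nat.prime_two).mp hdvd with h' | h'
    · exact absurd h' h1
    · exact h'
  have heven := FiniteField.even_card_of_char_two hchar
  obtain ⟨k, hk⟩ := h
  omega

lemma jmat_nondeg {F : Type} [Field F] {n : ℕ} {ψ : AddChar F ℂ} (hψ : ψ ≠ 1)
    {v : Fin n ⊕ Fin n → F} (hv : v ≠ 0) :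
    ∃ w : Fin n ⊕ Fin n → F, ψ (w ⬝ᵥ Jmat F n *ᵥ v) ≠ 1 := by
  have hJJ : Jmat F n * Jmat F n = -1 := by
    rw [Jmat, Matrix.fromBlocks_multiply, ← Matrix.fromBlocks_one,
      Matrix.fromBlocks_neg]
    congr 1 <;> simp
  have hJv : Jmat F n *ᵥ v ≠ 0 := by
    intro h0
    apply hv
    have : Jmat F n *ᵥ (Jmat F n *ᵥ v) = -v := by
      rw [Matrix.mulVec_mulVec, hJJ]
      simp [Matrix.neg_mulVec]
    rw [h0] at this
    simp only [Matrix.mulVec_zero] at this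
    exact neg_eq_zero.mp this.symm
  obtain ⟨i, hi⟩ := Function.ne_iff.mp hJv
  obtain ⟨t, ht⟩ := AddChar.ne_one_iff.mp hψ
  refine ⟨Pi.single i (t / (Jmat F n *ᵥ v) i), ?_⟩
  rw [single_dotProduct, div_mul_cancel₀]
  · exact ht
  · simpa using hi

lemma subRep_hasCentralChar {W : Type} [AddCommGroup W] [Module ℂ W]
    {π : Representation ℂ (Heis F ι M) W} {ψ : AddChar F ℂ}
    (hc : HasCentralChar π ψ) (p : Submodule ℂ W)
    (hp : ∀ g : Heis F ι M, ∀ w ∈ p, π g w ∈ p) :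
    HasCentralChar (subRep π p hp) ψ := by
  intro z
  refine LinearMap.ext fun x => Subtype.ext ?_
  show π ((0, z) : Heis F ι M) (x : W) = ((ψ z • (1 : p →ₗ[ℂ] p)) x : W)
  rw [hc z]
  simp

end AuxHeis

section AuxChar

variable {F : Type} [Field F] {ι : Type} [Fintype ι] {M : Matrix ι ι F}
  {W : Type} [AddCommGroup W] [Module ℂ W] [FiniteDimensional ℂ W]

lemma char_central {π : Representation ℂ (Heis F ι M) W} {ψ : AddChar F ℂ}
    (hc : HasCentralChar π ψ) (z : F) :
    (FDRep.of π).character ((0, z) : Heis F ι M) = ψ z * (Module.finrank ℂ W : ℂ) := by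
  show LinearMap.trace ℂ W (π ((0, z) : Heis F ι M)) = _
  rw [hc z, _root_.map_smul, LinearMap.trace_one]
  simp [smul_eq_mul]

lemma jmat_transpose {F : Type} [Field F] (n : ℕ) : (Jmat F n)ᵀ = -(Jmat F n) := by
  rw [Jmat, Matrix.fromBlocks_transpose, Matrix.fromBlocks_neg]
  simp

lemma char_vanish {F : Type} [Field F] [Fintype F] {n : ℕ}
    {W : Type} [AddCommGroup W] [Module ℂ W] [FiniteDimensional ℂ W]
    {π : Representation ℂ (Heis F (Fin n ⊕ Fin n) (Jmat F n)) W} {ψ : AddChar F ℂ}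
    (hodd : Odd (Fintype.card F)) (hψ : ψ ≠ 1) (hc : HasCentralChar π ψ)
    {v : Fin n ⊕ Fin n → F} (hv : v ≠ 0) (z : F) :
    (FDRep.of π).character ((v, z) : Heis F (Fin n ⊕ Fin n) (Jmat F n)) = 0 := by
  obtain ⟨w, hw⟩ := jmat_nondeg hψ hv
  set G := Heis F (Fin n ⊕ Fin n) (Jmat F n)
  set c := w ⬝ᵥ Jmat F n *ᵥ v with hcdef
  have h2 : (2 : F) ≠ 0 := two_ne_zero_of_odd_card hodd
  have h1 : (FDRep.of π).character ((v, z + c) : G)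
      = (FDRep.of π).character ((v, z) : G) := by
    have hcj := FDRep.char_conj (FDRep.of π) ((v, z) : G) ((w, (0 : F)) : G)
    rw [Heis.conj_eq h2 (jmat_transpose n) w v z _ _ rfl rfl] at hcj
    exact hcj
  have hmul := Heis.central_mul (M := Jmat F n) c ((0, c) : G) ((v, z) : G) rfl
  have h7 : π ((v, c + z) : G) = ψ c • π ((v, z) : G) := by
    have h6 := congrArg π hmul
    rw [_root_.map_mul (M := G) π ((0, c) : G) ((v, z) : G), hc c, smul_mul_assoc, one_mul] at h6
    exact h6.symm
  have h3 : (FDRep.of π).character ((v, z + c) : G)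
      = ψ c * (FDRep.of π).character ((v, z) : G) := by
    show LinearMap.trace ℂ W (π ((v, z + c) : G)) = ψ c * LinearMap.trace ℂ W (π ((v, z) : G))
    rw [add_comm z c, h7, _root_.map_smul, smul_eq_mul]
  have h4 : ψ c * (FDRep.of π).character ((v, z) : G)
      = (FDRep.of π).character ((v, z) : G) := h3.symm.trans h1
  have h5 : (ψ c - 1) * (FDRep.of π).character ((v, z) : G) = 0 := by
    linear_combination h4
  rcases mul_eq_zero.mp h5 with h | h
  · exact absurd (sub_eq_zero.mp h) hw
  · exact h

end AuxChar

open CategoryTheory in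
open scoped Classical in
lemma key_orth {F : Type} [Field F] [Fintype F] {n : ℕ}
    {W₁ W₂ : Type} [AddCommGroup W₁] [Module ℂ W₁] [FiniteDimensional ℂ W₁]
    [AddCommGroup W₂] [Module ℂ W₂] [FiniteDimensional ℂ W₂]
    {π₁ : Representation ℂ (Heis F (Fin n ⊕ Fin n) (Jmat F n)) W₁}
    {π₂ : Representation ℂ (Heis F (Fin n ⊕ Fin n) (Jmat F n)) W₂}
    {ψ : AddChar F ℂ}
    (hodd : Odd (Fintype.card F)) (hψ : ψ ≠ 1)
    (h₁ : HasCentralChar π₁ ψ) (h₂ : HasCentralChar π₂ ψ)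
    [Simple (FDRep.of π₁)] [Simple (FDRep.of π₂)] :
    ((Module.finrank ℂ W₁ : ℂ) * (Module.finrank ℂ W₂ : ℂ))
      = (Fintype.card F : ℂ) ^ (2 * n) *
        (if Nonempty (FDRep.of π₁ ≅ FDRep.of π₂) then 1 else 0) := by
  set G := Heis F (Fin n ⊕ Fin n) (Jmat F n) with hG
  set d₁ : ℂ := (Module.finrank ℂ W₁ : ℂ)
  set d₂ : ℂ := (Module.finrank ℂ W₂ : ℂ)
  letI : Fintype ↑(GrpCat.of G) := (inferInstance : Fintype G)
  letI : Invertible (Nat.card G : ℂ) :=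
    invertibleOfNonzero (by exact_mod_cast Nat.card_pos.ne')
  have horth := FDRep.char_orthonormal (k := ℂ) (G := G) (FDRep.of π₁) (FDRep.of π₂)
  let e : ((Fin n ⊕ Fin n → F) × F) ≃ G :=
    ⟨fun p => p, fun g => g, fun _ => rfl, fun _ => rfl⟩
  have hsum : (∑ g : G, (FDRep.of π₁).character g * (FDRep.of π₂).character g⁻¹)
      = (Fintype.card F : ℂ) * (d₁ * d₂) := by
    rw [← Equiv.sum_comp e (fun g : G => (FDRep.of π₁).character g * (FDRep.of π₂).character g⁻¹)]
    rw [Fintype.sum_prod_type]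
    rw [Finset.sum_eq_single_of_mem (0 : Fin n ⊕ Fin n → F) (Finset.mem_univ _) ?_]
    · have hterm : ∀ z : F,
          (FDRep.of π₁).character (e (0, z)) * (FDRep.of π₂).character (e (0, z))⁻¹
            = d₁ * d₂ := by
        intro z
        have ha : (FDRep.of π₁).character (e (0, z)) = ψ z * d₁ := char_central h₁ z
        have hb : (FDRep.of π₂).character ((e (0, z))⁻¹) = ψ (-z) * d₂ := by
          rw [Heis.central_inv z (e (0, z)) rfl]
          exact char_central h₂ (-z)
        rw [ha, hb]
        have hz : ψ z * ψ (-z) = 1 := by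
          rw [← AddChar.map_add_eq_mul, add_neg_cancel, AddChar.map_zero_eq_one]
        calc ψ z * d₁ * (ψ (-z) * d₂) = (ψ z * ψ (-z)) * (d₁ * d₂) := by ring
          _ = d₁ * d₂ := by rw [hz, one_mul]
      calc ∑ z : F, (FDRep.of π₁).character (e (0, z)) * (FDRep.of π₂).character (e (0, z))⁻¹
          = ∑ _z : F, d₁ * d₂ := Finset.sum_congr rfl fun z _ => hterm z
        _ = (Fintype.card F : ℂ) * (d₁ * d₂) := by
            rw [Finset.sum_const, Finset.card_univ, nsmul_eq_mul]
    · intro v _ hv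
      refine Finset.sum_eq_zero fun z _ => ?_
      have hz : (FDRep.of π₁).character (e (v, z)) = 0 := char_vanish hodd hψ h₁ hv z
      rw [hz, zero_mul]
  have hcardG : (Fintype.card G : ℂ)
      = (Fintype.card F : ℂ) ^ (2 * n) * (Fintype.card F : ℂ) := by
    have h1 : Fintype.card G = Fintype.card (Fin n ⊕ Fin n → F) * Fintype.card F :=
      Fintype.card_prod _ _
    have h2 : Fintype.card (Fin n ⊕ Fin n → F) = Fintype.card F ^ (2 * n) := by
      rw [Fintype.card_fun]
      congr 1
      simp [two_mul]
    rw [h1, h2]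
    push_cast
    ring
  set r : ℂ := if Nonempty (FDRep.of π₁ ≅ FDRep.of π₂) then 1 else 0 with hr
  have horth' : (Fintype.card G : ℂ)⁻¹
      * (∑ g : G, (FDRep.of π₁).character g * (FDRep.of π₂).character g⁻¹) = r := by
    rw [Nat.card_eq_fintype_card] at horth
    exact horth
  rw [hsum, hcardG] at horth'
  have hq : (Fintype.card F : ℂ) ≠ 0 := by exact_mod_cast Fintype.card_ne_zero
  have hpow : ((Fintype.card F : ℂ) ^ (2 * n)) ≠ 0 := pow_ne_zero _ hq
  field_simp at horth'
  refine mul_left_cancel₀ hq ?_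
  rw [horth']

/-- The "big" representation of the Heisenberg group on functions on `ι → F`:
the induced representation of `ψ` from the centre. -/
def bigRep (F : Type) [Field F] (ι : Type) [Fintype ι] (M : Matrix ι ι F)
    (ψ : AddChar F ℂ) : Representation ℂ (Heis F ι M) ((ι → F) → ℂ) where
  toFun h :=
    { toFun := fun f x => ψ (h.2 + (2 : F)⁻¹ * (x ⬝ᵥ M *ᵥ h.1)) * f (x + h.1)
      map_add' := by intro f g; funext x; simp [mul_add]
      map_smul' := by
        intro c f; funext x
        simp only [Pi.smul_apply, smul_eq_mul, RingHom.id_apply]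
        ring }
  map_one' := by
    refine LinearMap.ext fun f => funext fun x => ?_
    show ψ ((0:F) + (2 : F)⁻¹ * (x ⬝ᵥ M *ᵥ (0 : ι → F))) * f (x + (0 : ι → F)) = f x
    simp
  map_mul' g h := by
    refine LinearMap.ext fun f => funext fun x => ?_
    show ψ ((g.2 + h.2 + (2:F)⁻¹ * (g.1 ⬝ᵥ M *ᵥ h.1)) + (2 : F)⁻¹ * (x ⬝ᵥ M *ᵥ (g.1 + h.1)))
        * f (x + (g.1 + h.1))
      = ψ (g.2 + (2 : F)⁻¹ * (x ⬝ᵥ M *ᵥ g.1)) *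
        (ψ (h.2 + (2 : F)⁻¹ * ((x + g.1) ⬝ᵥ M *ᵥ h.1)) * f ((x + g.1) + h.1))
    rw [← mul_assoc, ← AddChar.map_add_eq_mul, ← add_assoc x g.1 h.1]
    congr 2
    simp only [Matrix.mulVec_add, dotProduct_add, add_dotProduct]
    ring

lemma bigRep_hasCentralChar (F : Type) [Field F] (ι : Type) [Fintype ι]
    (M : Matrix ι ι F) (ψ : AddChar F ℂ) :
    HasCentralChar (bigRep F ι M ψ) ψ := by
  intro z
  refine LinearMap.ext fun f => funext fun x => ?_
  show ψ (z + (2 : F)⁻¹ * (x ⬝ᵥ M *ᵥ (0 : ι → F))) * f (x + (0 : ι → F))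
      = (ψ z • f) x
  simp

/-- **Stone–von Neumann–Mackey.** For a nontrivial additive character `ψ`
of `F_q`: (i) there exists an irreducible complex representation of the Heisenberg group
with central character `ψ`; (ii) any two such are isomorphic; (iii) any such has
dimension `q^n`. -/
theorem stone_von_neumann_mackey
    (F : Type) [Field F] [Fintype F] (hodd : Odd (Fintype.card F))
    (n : ℕ) (hn : 0 < n)
    (ψ : AddChar F ℂ) (hψ : ψ ≠ 1) :
    (∃ P : CRep (Heis F (Fin n ⊕ Fin n) (Jmat F n)),
      IsIrredRep P.ρ ∧ HasCentralChar P.ρ ψ) ∧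
    (∀ P Q : CRep (Heis F (Fin n ⊕ Fin n) (Jmat F n)),
      IsIrredRep P.ρ → HasCentralChar P.ρ ψ →
      IsIrredRep Q.ρ → HasCentralChar Q.ρ ψ → RepIso P.ρ Q.ρ) ∧
    (∀ P : CRep (Heis F (Fin n ⊕ Fin n) (Jmat F n)),
      IsIrredRep P.ρ → HasCentralChar P.ρ ψ →
      Module.finrank ℂ P.carrier = Fintype.card F ^ n) := by
  classical
  have hdim : ∀ P : CRep (Heis F (Fin n ⊕ Fin n) (Jmat F n)),
      IsIrredRep P.ρ → HasCentralChar P.ρ ψ →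
      Module.finrank ℂ P.carrier = Fintype.card F ^ n := by
    intro P hirr hcc
    haveI : FiniteDimensional ℂ P.carrier := finiteDimensional_of_isIrredRep hirr
    haveI : CategoryTheory.Simple (FDRep.of P.ρ) := simple_of_isIrredRep hirr
    have hk := key_orth hodd hψ hcc hcc
    rw [if_pos ⟨CategoryTheory.Iso.refl _⟩, mul_one] at hk
    have hnat : Module.finrank ℂ P.carrier * Module.finrank ℂ P.carrier
        = Fintype.card F ^ n * Fintype.card F ^ n := by
      have hc : ((Module.finrank ℂ P.carrier * Module.finrank ℂ P.carrier : ℕ) : ℂ)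
          = ((Fintype.card F ^ n * Fintype.card F ^ n : ℕ) : ℂ) := by
        push_cast
        rw [hk, ← pow_add, two_mul]
      exact_mod_cast hc
    exact Nat.mul_self_inj.mp hnat
  refine ⟨?_, ?_, hdim⟩
  · -- existence
    haveI : Nontrivial ((Fin n ⊕ Fin n → F) → ℂ) := inferInstance
    obtain ⟨p, hp, hirr⟩ := exists_irred_subrep (bigRep F (Fin n ⊕ Fin n) (Jmat F n) ψ)
    exact ⟨⟨↥p, subRep (bigRep F (Fin n ⊕ Fin n) (Jmat F n) ψ) p hp⟩, hirr,
      subRep_hasCentralChar (bigRep_hasCentralChar F (Fin n ⊕ Fin n) (Jmat F n) ψ) p hp⟩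
  · -- uniqueness
    intro P Q hP1 hP2 hQ1 hQ2
    haveI : FiniteDimensional ℂ P.carrier := finiteDimensional_of_isIrredRep hP1
    haveI : FiniteDimensional ℂ Q.carrier := finiteDimensional_of_isIrredRep hQ1
    haveI : CategoryTheory.Simple (FDRep.of P.ρ) := simple_of_isIrredRep hP1
    haveI : CategoryTheory.Simple (FDRep.of Q.ρ) := simple_of_isIrredRep hQ1
    have hk := key_orth hodd hψ hP2 hQ2
    by_cases hne : Nonempty (FDRep.of P.ρ ≅ FDRep.of Q.ρ)
    · obtain ⟨i⟩ := hne
      set e := FDRep.isoToLinearEquiv i with he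
      refine ⟨e, fun g w => ?_⟩
      have h1 := congrArg (fun (φ : Q.carrier →ₗ[ℂ] Q.carrier) => φ (e w))
        (FDRep.Iso.conj_ρ i g)
      have h2 : (FDRep.isoToLinearEquiv i).conj (P.ρ g) (e w) = e (P.ρ g w) := by
        rw [LinearEquiv.conj_apply]
        simp only [LinearMap.coe_comp, Function.comp_apply, LinearEquiv.coe_coe]
        rw [← he, e.symm_apply_apply]
      exact (h1.trans h2).symm
    · exfalso
      rw [if_neg hne, mul_zero, hdim P hP1 hP2, hdim Q hQ1 hQ2] at hk
      have hnz : ((Fintype.card F ^ n : ℕ) : ℂ) ≠ 0 := by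
        exact_mod_cast pow_ne_zero n Fintype.card_ne_zero
      push_cast at hk
      exact hnz (by push_cast; exact mul_self_eq_zero.mp hk)
end

section
/- Let T : F_q^n → U be a surjective linear map, let Ω = {T' ∈ Hom(F_q^n, U) : β_{T'} = β_T}, and let W be the complex vector space of functions f : Ω → ℂ. Let A ⊆ End(W) be the subalgebra spanned by the operators L_r (r ∈ O_β) given by (L_r f)(T') = f(r^{−1} ∘ T'), and let A' ⊆ End(W) be the subalgebra spanned by the operators R_g (g ∈ G_{β_T}) given by (R_g f)(T') = f(T' ∘ g), where G_{β_T} = {g ∈ GL_n(F_q) : β_T(gx, gx') = β_T(x, x') for all x, x'}. Then A and A' are each the full commutant of the other in End(W). -/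
open Matrix
open scoped Kronecker

lemma negI_mem (F : Type) [Field F] (n : ℕ) :
    (-1 : (Matrix (Fin n ⊕ Fin n) (Fin n ⊕ Fin n) F)ˣ) ∈ Sp F n := by
  show ((-1 : (Matrix (Fin n ⊕ Fin n) (Fin n ⊕ Fin n) F)ˣ) : Matrix _ _ F)ᵀ * Jmat F n
      * ((-1 : (Matrix (Fin n ⊕ Fin n) (Fin n ⊕ Fin n) F)ˣ) : Matrix _ _ F) = Jmat F n
  simp

/-- The element `-I` of `Sp_{2n}(F)`. -/
def negI (F : Type) [Field F] (n : ℕ) : ↥(Sp F n) := ⟨-1, negI_mem F n⟩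

/-- A submodule is invariant under a representation. -/
def InvariantUnder {G : Type} [Monoid G] {W : Type} [AddCommGroup W] [Module ℂ W]
    (ρ : Representation ℂ G W) (p : Submodule ℂ W) : Prop :=
  ∀ g : G, ∀ w ∈ p, ρ g w ∈ p

/-- `p` is an invariant subspace on which `ρ` restricts to an irreducible
subrepresentation. -/
def IsIrreducibleSubrep {G : Type} [Monoid G] {W : Type} [AddCommGroup W] [Module ℂ W]
    (ρ : Representation ℂ G W) (p : Submodule ℂ W) : Prop :=
  InvariantUnder ρ p ∧ p ≠ ⊥ ∧
    ∀ s : Submodule ℂ W, s ≤ p → InvariantUnder ρ s → s = ⊥ ∨ s = p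

/-- Isomorphism of the subrepresentations carried by invariant subspaces `p`, `p'` of
representations `ρ`, `ρ'`. -/
def SubRepIso {G : Type} [Monoid G] {W W' : Type} [AddCommGroup W] [Module ℂ W]
    [AddCommGroup W'] [Module ℂ W']
    (ρ : Representation ℂ G W) (ρ' : Representation ℂ G W')
    (p : Submodule ℂ W) (p' : Submodule ℂ W') : Prop :=
  ∃ e : ↥p ≃ₗ[ℂ] ↥p', ∀ (g : G) (w w₂ : ↥p), ρ g ↑w = (w₂ : W) →
    ρ' g ↑(e w) = ((e w₂ : ↥p') : W')

/-- The multiplicity of the character `n_A ↦ ψ((1/2) Tr(B * A))` of the Siegel unipotent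
radical in the subrepresentation carried by the invariant subspace `p`. -/
noncomputable def multBOn {F : Type} [Field F] {n : ℕ} {W : Type} [AddCommGroup W] [Module ℂ W]
    (ρ : Representation ℂ (↥(Sp F n)) W) (ψ : AddChar F ℂ) (B : Matrix (Fin n) (Fin n) F)
    (p : Submodule ℂ W) : ℕ :=
  Module.finrank ℂ
    ↥(p ⊓ ⨅ A : {A : Matrix (Fin n) (Fin n) F // A.IsSymm},
      Module.End.eigenspace (ρ (nUnip F n A.1 A.2)) (ψ ((2 : F)⁻¹ * Matrix.trace (B * A.1))))

/-- The multiplicity `m'_B(ρ)` of the character `n_A ↦ ψ((1/2) Tr(B * A))` of the Siegel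
unipotent radical `N` in the restriction of `ρ` to `N`. -/
noncomputable def multB' {F : Type} [Field F] {n : ℕ} {W : Type} [AddCommGroup W] [Module ℂ W]
    (ρ : Representation ℂ (↥(Sp F n)) W) (ψ : AddChar F ℂ) (B : Matrix (Fin n) (Fin n) F) : ℕ :=
  Module.finrank ℂ
    ↥(⨅ A : {A : Matrix (Fin n) (Fin n) F // A.IsSymm},
      Module.End.eigenspace (ρ (nUnip F n A.1 A.2)) (ψ ((2 : F)⁻¹ * Matrix.trace (B * A.1))))

/-- The symmetric bilinear form `β_T(x, x') = β(Tx, Tx')` on `F^n`, where `β` is the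
bilinear form on `F^k` with Gram matrix `G`. -/
def betaT {F : Type} [Field F] {k n : ℕ} (G : Matrix (Fin k) (Fin k) F)
    (T : Matrix (Fin k) (Fin n) F) : (Fin n → F) → (Fin n → F) → F :=
  fun x x' => (T *ᵥ x) ⬝ᵥ (G *ᵥ (T *ᵥ x'))

/-- The subgroup of invertible matrices preserving a bilinear form `Φ` on `ι → F`. -/
def formStab (F : Type) [Field F] (ι : Type) [Fintype ι] [DecidableEq ι]
    (Φ : (ι → F) → (ι → F) → F) : Subgroup (Matrix ι ι F)ˣ where
  carrier := {g | ∀ x y : ι → F, Φ ((g : Matrix ι ι F) *ᵥ x) ((g : Matrix ι ι F) *ᵥ y) = Φ x y}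
  one_mem' := by intro x y; simp
  mul_mem' := by
    intro a b ha hb x y
    simp only [Units.val_mul, ← Matrix.mulVec_mulVec]
    rw [ha, hb]
  inv_mem' := by
    intro a ha x y
    have h : ∀ v : ι → F, (a : Matrix ι ι F) *ᵥ (((a⁻¹ : (Matrix ι ι F)ˣ) : Matrix ι ι F) *ᵥ v) = v := by
      intro v
      rw [Matrix.mulVec_mulVec, ← Units.val_mul, mul_inv_cancel, Units.val_one, Matrix.one_mulVec]
    calc Φ ((a⁻¹ : (Matrix ι ι F)ˣ) *ᵥ x) ((a⁻¹ : (Matrix ι ι F)ˣ) *ᵥ y)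
        = Φ ((a : Matrix ι ι F) *ᵥ ((a⁻¹ : (Matrix ι ι F)ˣ) *ᵥ x))
            ((a : Matrix ι ι F) *ᵥ ((a⁻¹ : (Matrix ι ι F)ˣ) *ᵥ y)) := (ha _ _).symm
      _ = Φ x y := by rw [h, h]

/-- The `n × n` matrix `diag(G, 0)` obtained by placing `G` in the upper-left `k × k`
corner and zeros elsewhere. -/
def diagEmbed {F : Type} [Field F] {k n : ℕ} (G : Matrix (Fin k) (Fin k) F) (h : k ≤ n) :
    Matrix (Fin n) (Fin n) F :=
  Matrix.reindex (finSumFinEquiv.trans (finCongr (Nat.add_sub_cancel' h)))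
    (finSumFinEquiv.trans (finCongr (Nat.add_sub_cancel' h)))
    (fromBlocks G 0 0 (0 : Matrix (Fin (n - k)) (Fin (n - k)) F))


section DoubleCommutant

variable (F : Type) [Field F] (n k : ℕ)
variable (G : Matrix (Fin k) (Fin k) F) (T : Matrix (Fin k) (Fin n) F)

/-- The fiber `Ω = {T' : β_{T'} = β_T}`. -/
def OmegaFiber : Type := {T' : Matrix (Fin k) (Fin n) F // betaT G T' = betaT G T}

lemma betaT_mul_left (r : (Matrix (Fin k) (Fin k) F)ˣ)
    (hr : r ∈ formStab F (Fin k) (fun u v => u ⬝ᵥ (G *ᵥ v)))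
    (S : Matrix (Fin k) (Fin n) F) :
    betaT G ((r : Matrix (Fin k) (Fin k) F) * S) = betaT G S := by
  funext x
  funext x'
  show (((r : Matrix (Fin k) (Fin k) F) * S) *ᵥ x) ⬝ᵥ
      (G *ᵥ (((r : Matrix (Fin k) (Fin k) F) * S) *ᵥ x')) = _
  rw [← Matrix.mulVec_mulVec, ← Matrix.mulVec_mulVec]
  exact hr (S *ᵥ x) (S *ᵥ x')

lemma betaT_mul_right (g : (Matrix (Fin n) (Fin n) F)ˣ)
    (hg : g ∈ formStab F (Fin n) (betaT G T))
    (T' : Matrix (Fin k) (Fin n) F) (hT' : betaT G T' = betaT G T) :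
    betaT G (T' * (g : Matrix (Fin n) (Fin n) F)) = betaT G T := by
  funext x
  funext x'
  show ((T' * (g : Matrix (Fin n) (Fin n) F)) *ᵥ x) ⬝ᵥ
      (G *ᵥ ((T' * (g : Matrix (Fin n) (Fin n) F)) *ᵥ x')) = betaT G T x x'
  rw [← Matrix.mulVec_mulVec, ← Matrix.mulVec_mulVec]
  have h1 : betaT G T' ((g : Matrix (Fin n) (Fin n) F) *ᵥ x)
      ((g : Matrix (Fin n) (Fin n) F) *ᵥ x') = betaT G T x x' := by
    rw [hT']
    exact hg x x'
  exact h1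

/-- The operator `L_r`, `(L_r f)(T') = f(r⁻¹ ∘ T')`, for `r ∈ O_β`. -/
def opL (r : ↥(formStab F (Fin k) (fun u v => u ⬝ᵥ (G *ᵥ v)))) :
    (OmegaFiber F n k G T → ℂ) →ₗ[ℂ] (OmegaFiber F n k G T → ℂ) where
  toFun f := fun T' => f ⟨((↑(r⁻¹) : (Matrix (Fin k) (Fin k) F)ˣ) : Matrix (Fin k) (Fin k) F) * T'.1,
    by rw [betaT_mul_left F n k G (↑(r⁻¹)) (r⁻¹).2 T'.1, T'.2]⟩
  map_add' f g := rfl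
  map_smul' c f := rfl

/-- The operator `R_g`, `(R_g f)(T') = f(T' ∘ g)`, for `g ∈ G_{β_T}`. -/
def opR (g : ↥(formStab F (Fin n) (betaT G T))) :
    (OmegaFiber F n k G T → ℂ) →ₗ[ℂ] (OmegaFiber F n k G T → ℂ) where
  toFun f := fun T' => f ⟨T'.1 * ((↑g : (Matrix (Fin n) (Fin n) F)ˣ) : Matrix (Fin n) (Fin n) F),
    betaT_mul_right F n k G T (↑g) g.2 T'.1 T'.2⟩
  map_add' f g := rfl
  map_smul' c f := rfl

end DoubleCommutant


section AuxProof
variable {F : Type} [Field F] {n k : ℕ}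



lemma dot_ext {m : ℕ} {M N : Matrix (Fin m) (Fin m) F}
    (h : ∀ x y, x ⬝ᵥ (M *ᵥ y) = x ⬝ᵥ (N *ᵥ y)) : M = N := by
  ext i j
  have := h (Pi.single i 1) (Pi.single j 1)
  simpa [Matrix.mulVec_single, single_dotProduct] using this

lemma form_eq (G : Matrix (Fin k) (Fin k) F) (S : Matrix (Fin k) (Fin n) F)
    (x y : Fin n → F) : (S *ᵥ x) ⬝ᵥ (G *ᵥ (S *ᵥ y)) = x ⬝ᵥ ((Sᵀ * G * S) *ᵥ y) := by
  simp [Matrix.dotProduct_mulVec, Matrix.mulVec_mulVec, Matrix.vecMul_mulVec, Matrix.mul_assoc]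

lemma left_transitive {G : Matrix (Fin k) (Fin k) F} (hG : G.IsSymm) (hGu : IsUnit G)
    {T : Matrix (Fin k) (Fin n) F} {σ : Matrix (Fin n) (Fin k) F} (hσ : T * σ = 1)
    {T' : Matrix (Fin k) (Fin n) F} (h : T'ᵀ * G * T' = Tᵀ * G * T) :
    ∃ s : Matrix (Fin k) (Fin k) F, IsUnit s ∧ sᵀ * G * s = G ∧ s * T = T' := by
  have hGdet : IsUnit G.det := (Matrix.isUnit_iff_isUnit_det G).1 hGu
  set r := T' * σ with hrdef
  have hr : rᵀ * G * r = G := by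
    have h1 : rᵀ * G * r = σᵀ * (T'ᵀ * G * T') * σ := by
      simp [hrdef, Matrix.transpose_mul, Matrix.mul_assoc]
    rw [h1, h]
    have h2 : σᵀ * (Tᵀ * G * T) * σ = (T * σ)ᵀ * G * (T * σ) := by
      simp [Matrix.transpose_mul, Matrix.mul_assoc]
    rw [h2, hσ]
    simp
  have hrdet : IsUnit r.det := by
    have h3 : r.det * G.det * r.det = G.det := by
      have := congrArg Matrix.det hr
      simpa [Matrix.det_mul, Matrix.det_transpose, mul_comm, mul_left_comm] using this
    refine isUnit_iff_ne_zero.2 fun h0 => ?_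
    rw [h0] at h3
    simp at h3
    exact hGdet.ne_zero h3.symm
  have hru : IsUnit r := (Matrix.isUnit_iff_isUnit_det r).2 hrdet
  have hrtdet : IsUnit rᵀ.det := by rwa [Matrix.det_transpose]
  -- key : rᵀ * (G * T') = G * T
  have key : rᵀ * (G * T') = G * T := by
    have : rᵀ * (G * T') = σᵀ * (T'ᵀ * G * T') := by
      simp [hrdef, Matrix.transpose_mul, Matrix.mul_assoc]
    rw [this, h, ← Matrix.mul_assoc, ← Matrix.mul_assoc, ← Matrix.transpose_mul, hσ]
    simp
  refine ⟨G⁻¹ * rᵀ⁻¹ * G, ?_, ?_, ?_⟩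
  · -- IsUnit
    exact ((Matrix.isUnit_nonsing_inv_iff.2 hGu).mul
      (Matrix.isUnit_nonsing_inv_iff.2 ((Matrix.isUnit_iff_isUnit_det _).2 hrtdet))).mul hGu
  · -- isometry
    have hGt : Gᵀ = G := hG
    have hGinvT : (G⁻¹)ᵀ = G⁻¹ := by rw [Matrix.transpose_nonsing_inv, hGt]
    have hrinv : r⁻¹ * G⁻¹ * rᵀ⁻¹ = G⁻¹ := by
      have := congrArg (fun A : Matrix (Fin k) (Fin k) F => A⁻¹) hr
      simpa [Matrix.mul_inv_rev, Matrix.mul_assoc] using this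
    have hsT : (G⁻¹ * rᵀ⁻¹ * G)ᵀ = G * r⁻¹ * G⁻¹ := by
      rw [Matrix.transpose_mul, Matrix.transpose_mul, hGt, hGinvT,
        ← Matrix.transpose_nonsing_inv, Matrix.transpose_transpose, Matrix.mul_assoc]
    rw [hsT]
    calc G * r⁻¹ * G⁻¹ * G * (G⁻¹ * rᵀ⁻¹ * G)
        = G * (r⁻¹ * ((G⁻¹ * G) * G⁻¹) * rᵀ⁻¹) * G := by simp [Matrix.mul_assoc]
      _ = G * (r⁻¹ * G⁻¹ * rᵀ⁻¹) * G := by rw [Matrix.nonsing_inv_mul _ hGdet]; simp [Matrix.mul_assoc]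
      _ = G * G⁻¹ * G := by rw [hrinv, Matrix.mul_assoc]
      _ = G := by rw [Matrix.mul_nonsing_inv _ hGdet, Matrix.one_mul]
  · -- s * T = T'
    have h4 : rᵀ⁻¹ * (rᵀ * (G * T')) = G * T' := by
      rw [← Matrix.mul_assoc, Matrix.nonsing_inv_mul _ hrtdet, Matrix.one_mul]
    calc G⁻¹ * rᵀ⁻¹ * G * T = G⁻¹ * (rᵀ⁻¹ * (G * T)) := by simp [Matrix.mul_assoc]
      _ = G⁻¹ * (G * T') := by rw [← key, h4]
      _ = T' := by rw [← Matrix.mul_assoc, Matrix.nonsing_inv_mul _ hGdet, Matrix.one_mul]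

lemma right_lift {T : Matrix (Fin k) (Fin n) F} {σ : Matrix (Fin n) (Fin k) F}
    (hσ : T * σ = 1) {r : Matrix (Fin k) (Fin k) F} (hru : IsUnit r) :
    ∃ g : (Matrix (Fin n) (Fin n) F)ˣ, T * (g : Matrix (Fin n) (Fin n) F) = r * T := by
  have hrdet : IsUnit r.det := (Matrix.isUnit_iff_isUnit_det r).1 hru
  have hcancel : ∀ A B : Matrix (Fin k) (Fin k) F, (σ * A * T) * (σ * B * T) = σ * (A * B) * T := by
    intro A B
    calc (σ * A * T) * (σ * B * T) = σ * A * (T * σ) * B * T := by simp [Matrix.mul_assoc]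
      _ = σ * (A * B) * T := by rw [hσ]; simp [Matrix.mul_assoc]
  have habs : ∀ x y p : Matrix (Fin n) (Fin n) F, x * y = p → y * x = p → x * p = x →
      p * x = x → y * p = y → p * y = y → p * p = p →
      (x + 1 - p) * (y + 1 - p) = 1 := by
    intro x y p h1 h2 h3 h4 h5 h6 h7
    simp only [mul_add, add_mul, sub_mul, mul_sub, mul_one, one_mul]
    rw [h1, h3, h6, h7]
    abel
  have hrr : r * r⁻¹ = 1 := Matrix.mul_nonsing_inv _ hrdet
  have hrr' : r⁻¹ * r = 1 := Matrix.nonsing_inv_mul _ hrdet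
  have hx1 : σ * r * T * (σ * (1 : Matrix (Fin k) (Fin k) F) * T) = σ * r * T := by
    simpa using hcancel r 1
  have h1x : (σ * (1 : Matrix (Fin k) (Fin k) F) * T) * (σ * r * T) = σ * r * T := by
    simpa using hcancel 1 r
  have hy1 : σ * r⁻¹ * T * (σ * (1 : Matrix (Fin k) (Fin k) F) * T) = σ * r⁻¹ * T := by
    simpa using hcancel r⁻¹ 1
  have h1y : (σ * (1 : Matrix (Fin k) (Fin k) F) * T) * (σ * r⁻¹ * T) = σ * r⁻¹ * T := by
    simpa using hcancel 1 r⁻¹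
  have h11 : (σ * (1 : Matrix (Fin k) (Fin k) F) * T) * (σ * (1 : Matrix (Fin k) (Fin k) F) * T)
      = σ * (1 : Matrix (Fin k) (Fin k) F) * T := by simpa using hcancel 1 1
  have hxy : (σ * r * T) * (σ * r⁻¹ * T) = σ * (1 : Matrix (Fin k) (Fin k) F) * T := by
    rw [hcancel, hrr]
  have hyx : (σ * r⁻¹ * T) * (σ * r * T) = σ * (1 : Matrix (Fin k) (Fin k) F) * T := by
    rw [hcancel, hrr']
  refine ⟨⟨σ * r * T + 1 - σ * (1 : Matrix (Fin k) (Fin k) F) * T,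
    σ * r⁻¹ * T + 1 - σ * (1 : Matrix (Fin k) (Fin k) F) * T,
    habs _ _ _ hxy hyx hx1 h1x hy1 h1y h11,
    habs _ _ _ hyx hxy hy1 h1y hx1 h1x h11⟩, ?_⟩
  show T * (σ * r * T + 1 - σ * (1 : Matrix (Fin k) (Fin k) F) * T) = r * T
  rw [Matrix.mul_sub, Matrix.mul_add, Matrix.mul_one, Matrix.mul_assoc σ r T,
    Matrix.mul_assoc σ (1 : Matrix (Fin k) (Fin k) F) T,
    ← Matrix.mul_assoc T σ (r * T), ← Matrix.mul_assoc T σ ((1 : Matrix (Fin k) (Fin k) F) * T),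
    hσ, Matrix.one_mul, Matrix.one_mul, Matrix.one_mul]
  abel


lemma exists_sigma {T : Matrix (Fin k) (Fin n) F} (hT : Function.Surjective T.mulVecLin) :
    ∃ σ : Matrix (Fin n) (Fin k) F, T * σ = 1 := by
  obtain ⟨g, hg⟩ := T.mulVecLin.exists_rightInverse_of_surjective
    (LinearMap.range_eq_top.2 hT)
  refine ⟨LinearMap.toMatrix' g, ?_⟩
  apply Matrix.toLin'.injective
  rw [Matrix.toLin'_mul, Matrix.toLin'_one]
  rw [Matrix.toLin'_apply', Matrix.toLin'_toMatrix']
  exact hg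

lemma left_unit_cancel (u : (Matrix (Fin k) (Fin k) F)ˣ) (X Y : Matrix (Fin k) (Fin n) F) :
    ((u⁻¹ : (Matrix (Fin k) (Fin k) F)ˣ) : Matrix (Fin k) (Fin k) F) * X = Y ↔
      X = (u : Matrix (Fin k) (Fin k) F) * Y := by
  constructor
  · intro h; rw [← h, ← Matrix.mul_assoc, Units.mul_inv, Matrix.one_mul]
  · intro h; rw [h, ← Matrix.mul_assoc, Units.inv_mul, Matrix.one_mul]

lemma right_unit_cancel (u : (Matrix (Fin n) (Fin n) F)ˣ) (X Y : Matrix (Fin k) (Fin n) F) :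
    X * ((u⁻¹ : (Matrix (Fin n) (Fin n) F)ˣ) : Matrix (Fin n) (Fin n) F) = Y ↔
      X = Y * (u : Matrix (Fin n) (Fin n) F) := by
  constructor
  · intro h; rw [← h, Matrix.mul_assoc, Units.inv_mul, Matrix.mul_one]
  · intro h; rw [h, Matrix.mul_assoc, Units.mul_inv, Matrix.mul_one]

end AuxProof

section FiberInstances
variable (F : Type) [Field F] [Fintype F] [DecidableEq F] (n k : ℕ)
variable (G : Matrix (Fin k) (Fin k) F) (T : Matrix (Fin k) (Fin n) F)

instance : Fintype (OmegaFiber F n k G T) := by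
  unfold OmegaFiber; infer_instance

instance : DecidableEq (OmegaFiber F n k G T) := by
  unfold OmegaFiber; infer_instance

lemma opLR_comm (r : ↥(formStab F (Fin k) (fun u v => u ⬝ᵥ (G *ᵥ v))))
    (g : ↥(formStab F (Fin n) (betaT G T))) :
    opL F n k G T r * opR F n k G T g = opR F n k G T g * opL F n k G T r := by
  refine LinearMap.ext fun f => ?_
  funext P
  show f ⟨((((r⁻¹ : _) : (Matrix (Fin k) (Fin k) F)ˣ) : Matrix (Fin k) (Fin k) F) * P.1) *
      (((g : (Matrix (Fin n) (Fin n) F)ˣ)) : Matrix (Fin n) (Fin n) F), _⟩ =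
    f ⟨(((r⁻¹ : _) : (Matrix (Fin k) (Fin k) F)ˣ) : Matrix (Fin k) (Fin k) F) *
      (P.1 * (((g : (Matrix (Fin n) (Fin n) F)ˣ)) : Matrix (Fin n) (Fin n) F)), _⟩
  exact congrArg f (Subtype.ext (Matrix.mul_assoc _ _ _))

end FiberInstances


section FiberHelpers
variable (F : Type) [Field F] [Fintype F] [DecidableEq F] (n k : ℕ)
variable (G : Matrix (Fin k) (Fin k) F) (T : Matrix (Fin k) (Fin n) F)

lemma OmegaFiber.ext1 {P Q : OmegaFiber F n k G T} (h : P.1 = Q.1) : P = Q :=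
  Subtype.ext h

lemma OmegaFiber.ext_iff1 {P Q : OmegaFiber F n k G T} : P = Q ↔ P.1 = Q.1 :=
  Subtype.ext_iff

/-- The left action of the isometry group on the fiber. -/
def aLmap (r : ↥(formStab F (Fin k) (fun u v => u ⬝ᵥ (G *ᵥ v))))
    (P : OmegaFiber F n k G T) : OmegaFiber F n k G T :=
  ⟨((r : (Matrix (Fin k) (Fin k) F)ˣ) : Matrix (Fin k) (Fin k) F) * P.1,
    (betaT_mul_left F n k G (↑r) r.2 P.1).trans P.2⟩

/-- The right action of the stabilizer group on the fiber. -/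
def aRmap (g : ↥(formStab F (Fin n) (betaT G T)))
    (P : OmegaFiber F n k G T) : OmegaFiber F n k G T :=
  ⟨P.1 * ((g : (Matrix (Fin n) (Fin n) F)ˣ) : Matrix (Fin n) (Fin n) F),
    betaT_mul_right F n k G T (↑g) g.2 P.1 P.2⟩

lemma opL_apply (r : ↥(formStab F (Fin k) (fun u v => u ⬝ᵥ (G *ᵥ v))))
    (f : OmegaFiber F n k G T → ℂ) (P : OmegaFiber F n k G T) :
    opL F n k G T r f P = f (aLmap F n k G T r⁻¹ P) := rfl

lemma opR_apply (g : ↥(formStab F (Fin n) (betaT G T)))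
    (f : OmegaFiber F n k G T → ℂ) (P : OmegaFiber F n k G T) :
    opR F n k G T g f P = f (aRmap F n k G T g P) := rfl

lemma deltaL (r : ↥(formStab F (Fin k) (fun u v => u ⬝ᵥ (G *ᵥ v))))
    (S : OmegaFiber F n k G T) :
    opL F n k G T r (Pi.single S 1) = Pi.single (aLmap F n k G T r S) (1 : ℂ) := by
  funext P
  rw [opL_apply, Pi.single_apply, Pi.single_apply]
  refine if_congr ?_ rfl rfl
  rw [OmegaFiber.ext_iff1, OmegaFiber.ext_iff1]
  show (((r : (Matrix (Fin k) (Fin k) F)ˣ)⁻¹ : (Matrix (Fin k) (Fin k) F)ˣ) :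
      Matrix (Fin k) (Fin k) F) * P.1 = S.1 ↔
    P.1 = ((r : (Matrix (Fin k) (Fin k) F)ˣ) : Matrix (Fin k) (Fin k) F) * S.1
  exact left_unit_cancel _ _ _

lemma deltaR (g : ↥(formStab F (Fin n) (betaT G T)))
    (S : OmegaFiber F n k G T) :
    opR F n k G T g (Pi.single S 1) = Pi.single (aRmap F n k G T g⁻¹ S) (1 : ℂ) := by
  funext P
  rw [opR_apply, Pi.single_apply, Pi.single_apply]
  refine if_congr ?_ rfl rfl
  rw [OmegaFiber.ext_iff1, OmegaFiber.ext_iff1]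
  show P.1 * ((g : (Matrix (Fin n) (Fin n) F)ˣ) : Matrix (Fin n) (Fin n) F) = S.1 ↔
    P.1 = S.1 * (((g : (Matrix (Fin n) (Fin n) F)ˣ)⁻¹ : (Matrix (Fin n) (Fin n) F)ˣ) :
      Matrix (Fin n) (Fin n) F)
  have := right_unit_cancel ((g : (Matrix (Fin n) (Fin n) F)ˣ))⁻¹ P.1 S.1
  rw [inv_inv] at this
  exact this

end FiberHelpers

/-- The algebras generated by the operators `L_r` (`r ∈ O_β`) and
`R_g` (`g ∈ G_{β_T}`) on the space of functions on the fiber `Ω` are each the full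
commutant of the other. -/
theorem double_commutant_on_fiber
    (F : Type) [Field F] [Fintype F] [DecidableEq F] (hodd : Odd (Fintype.card F))
    (n k : ℕ)
    (G : Matrix (Fin k) (Fin k) F) (hG : G.IsSymm) (hGnd : IsUnit G)
    (T : Matrix (Fin k) (Fin n) F) (hT : Function.Surjective T.mulVecLin) :
    Subalgebra.centralizer ℂ
        ((Algebra.adjoin ℂ (Set.range (opL F n k G T)) :
          Subalgebra ℂ ((OmegaFiber F n k G T → ℂ) →ₗ[ℂ] (OmegaFiber F n k G T → ℂ))) :
          Set ((OmegaFiber F n k G T → ℂ) →ₗ[ℂ] (OmegaFiber F n k G T → ℂ)))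
      = Algebra.adjoin ℂ (Set.range (opR F n k G T)) ∧
    Subalgebra.centralizer ℂ
        ((Algebra.adjoin ℂ (Set.range (opR F n k G T)) :
          Subalgebra ℂ ((OmegaFiber F n k G T → ℂ) →ₗ[ℂ] (OmegaFiber F n k G T → ℂ))) :
          Set ((OmegaFiber F n k G T → ℂ) →ₗ[ℂ] (OmegaFiber F n k G T → ℂ)))
      = Algebra.adjoin ℂ (Set.range (opL F n k G T)) := by
  classical
  obtain ⟨σ, hσ⟩ := exists_sigma hT
  have hmat : ∀ T' : Matrix (Fin k) (Fin n) F, betaT G T' = betaT G T →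
      T'ᵀ * G * T' = Tᵀ * G * T := by
    intro T' h
    apply dot_ext
    intro x y
    rw [← form_eq, ← form_eq]
    exact congrFun (congrFun h x) y
  have hLex : ∀ S : OmegaFiber F n k G T,
      ∃ r : ↥(formStab F (Fin k) (fun u v => u ⬝ᵥ (G *ᵥ v))),
        ((r : (Matrix (Fin k) (Fin k) F)ˣ) : Matrix (Fin k) (Fin k) F) * T = S.1 := by
    intro S
    obtain ⟨s, hsu, hsiso, hsT⟩ := left_transitive hG hGnd hσ (hmat S.1 S.2)
    refine ⟨⟨hsu.unit, ?_⟩, ?_⟩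
    · intro x y
      show ((hsu.unit : Matrix (Fin k) (Fin k) F) *ᵥ x) ⬝ᵥ
          (G *ᵥ ((hsu.unit : Matrix (Fin k) (Fin k) F) *ᵥ y)) = x ⬝ᵥ (G *ᵥ y)
      rw [hsu.unit_spec, form_eq, hsiso]
    · show (hsu.unit : Matrix (Fin k) (Fin k) F) * T = S.1
      rw [hsu.unit_spec, hsT]
  choose rho hrho using hLex
  have hRex : ∀ S : OmegaFiber F n k G T,
      ∃ g : ↥(formStab F (Fin n) (betaT G T)),
        T * ((g : (Matrix (Fin n) (Fin n) F)ˣ) : Matrix (Fin n) (Fin n) F) = S.1 := by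
    intro S
    obtain ⟨s, hsu, hsiso, hsT⟩ := left_transitive hG hGnd hσ (hmat S.1 S.2)
    obtain ⟨g, hgT⟩ := right_lift hσ hsu
    have hTg : T * (g : Matrix (Fin n) (Fin n) F) = S.1 := by rw [hgT, hsT]
    have hg : g ∈ formStab F (Fin n) (betaT G T) := by
      intro x y
      have h1 : betaT G T ((g : Matrix (Fin n) (Fin n) F) *ᵥ x)
          ((g : Matrix (Fin n) (Fin n) F) *ᵥ y)
          = betaT G (T * (g : Matrix (Fin n) (Fin n) F)) x y := by
        show (T *ᵥ ((g : Matrix (Fin n) (Fin n) F) *ᵥ x)) ⬝ᵥ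
            (G *ᵥ (T *ᵥ ((g : Matrix (Fin n) (Fin n) F) *ᵥ y)))
          = ((T * (g : Matrix (Fin n) (Fin n) F)) *ᵥ x) ⬝ᵥ
            (G *ᵥ ((T * (g : Matrix (Fin n) (Fin n) F)) *ᵥ y))
        rw [Matrix.mulVec_mulVec x T (g : Matrix (Fin n) (Fin n) F),
          Matrix.mulVec_mulVec y T (g : Matrix (Fin n) (Fin n) F)]
      rw [h1, hTg]
      exact congrFun (congrFun S.2 x) y
    exact ⟨⟨g, hg⟩, hTg⟩
  choose gam hgam using hRex
  have hext : ∀ (Φ Ψ : (OmegaFiber F n k G T → ℂ) →ₗ[ℂ] (OmegaFiber F n k G T → ℂ)),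
      (∀ S, Φ (Pi.single S 1) = Ψ (Pi.single S 1)) → Φ = Ψ := by
    intro Φ Ψ h
    apply (Pi.basisFun ℂ (OmegaFiber F n k G T)).ext
    intro S
    simpa using h S
  set T₀ : OmegaFiber F n k G T := ⟨T, rfl⟩ with hT₀def
  have hLdelta : ∀ S' : OmegaFiber F n k G T,
      opL F n k G T (rho S') (Pi.single T₀ 1) = Pi.single S' (1 : ℂ) := by
    intro S'
    rw [deltaL]
    exact congrArg (fun Z => Pi.single Z (1 : ℂ))
      (OmegaFiber.ext1 F n k G T (P := aLmap F n k G T (rho S') T₀) (Q := S') (hrho S'))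
  have hRdelta : ∀ S' : OmegaFiber F n k G T,
      opR F n k G T ((gam S')⁻¹) (Pi.single T₀ 1) = Pi.single S' (1 : ℂ) := by
    intro S'
    rw [deltaR, inv_inv]
    exact congrArg (fun Z => Pi.single Z (1 : ℂ))
      (OmegaFiber.ext1 F n k G T (P := aRmap F n k G T (gam S') T₀) (Q := S') (hgam S'))
  -- hard direction 1 : commutes with all opL ⟹ lies in span of opR's
  have hard1 : ∀ Φ : (OmegaFiber F n k G T → ℂ) →ₗ[ℂ] (OmegaFiber F n k G T → ℂ),
      (∀ r, opL F n k G T r * Φ = Φ * opL F n k G T r) →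
      Φ = ∑ S : OmegaFiber F n k G T,
        (Φ (Pi.single T₀ 1) S) • opR F n k G T ((gam S)⁻¹) := by
    intro Φ hΦ
    apply hext
    intro S'
    funext P
    have l1 : Φ (Pi.single S' (1 : ℂ)) = opL F n k G T (rho S') (Φ (Pi.single T₀ 1)) := by
      rw [← hLdelta S']
      have h2 := congrArg (fun Ψ => Ψ (Pi.single T₀ (1 : ℂ))) (hΦ (rho S'))
      simpa only [Module.End.mul_apply] using h2.symm
    rw [l1, opL_apply]
    rw [LinearMap.sum_apply]
    simp only [LinearMap.smul_apply]
    rw [Finset.sum_apply]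
    have step : ∀ S : OmegaFiber F n k G T,
        ((Φ (Pi.single T₀ 1) S) • (opR F n k G T ((gam S)⁻¹) (Pi.single S' 1))) P
        = if S = aLmap F n k G T (rho S')⁻¹ P then Φ (Pi.single T₀ 1) S else 0 := by
      intro S
      rw [Pi.smul_apply, opR_apply, Pi.single_apply, smul_eq_mul, mul_ite, mul_one, mul_zero]
      refine if_congr ?_ rfl rfl
      rw [OmegaFiber.ext_iff1, OmegaFiber.ext_iff1]
      have key : S'.1 * ((gam S : (Matrix (Fin n) (Fin n) F)ˣ) : Matrix (Fin n) (Fin n) F)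
          = ((rho S' : (Matrix (Fin k) (Fin k) F)ˣ) : Matrix (Fin k) (Fin k) F) * S.1 := by
        rw [← hrho S', ← hgam S, Matrix.mul_assoc]
      show P.1 * (((gam S : (Matrix (Fin n) (Fin n) F)ˣ)⁻¹ : (Matrix (Fin n) (Fin n) F)ˣ) :
          Matrix (Fin n) (Fin n) F) = S'.1 ↔
        S.1 = (((rho S' : (Matrix (Fin k) (Fin k) F)ˣ)⁻¹ : (Matrix (Fin k) (Fin k) F)ˣ) :
          Matrix (Fin k) (Fin k) F) * P.1
      constructor
      · intro h
        have h2 := (right_unit_cancel _ P.1 S'.1).1 h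
        rw [key] at h2
        exact ((left_unit_cancel _ P.1 S.1).2 h2).symm
      · intro h
        have h3 := (left_unit_cancel _ P.1 S.1).1 h.symm
        rw [← key] at h3
        exact (right_unit_cancel _ P.1 S'.1).2 h3
    rw [Finset.sum_congr rfl (fun S _ => step S)]
    rw [Finset.sum_ite_eq' Finset.univ (aLmap F n k G T (rho S')⁻¹ P)
      (fun S => Φ (Pi.single T₀ 1) S)]
    simp
  -- hard direction 2 : commutes with all opR ⟹ lies in span of opL's
  have hard2 : ∀ Φ : (OmegaFiber F n k G T → ℂ) →ₗ[ℂ] (OmegaFiber F n k G T → ℂ),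
      (∀ g, opR F n k G T g * Φ = Φ * opR F n k G T g) →
      Φ = ∑ S : OmegaFiber F n k G T,
        (Φ (Pi.single T₀ 1) S) • opL F n k G T (rho S) := by
    intro Φ hΦ
    apply hext
    intro S'
    funext P
    have l1 : Φ (Pi.single S' (1 : ℂ)) = opR F n k G T ((gam S')⁻¹) (Φ (Pi.single T₀ 1)) := by
      rw [← hRdelta S']
      have h2 := congrArg (fun Ψ => Ψ (Pi.single T₀ (1 : ℂ))) (hΦ ((gam S')⁻¹))
      simpa only [Module.End.mul_apply] using h2.symm
    rw [l1, opR_apply]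
    rw [LinearMap.sum_apply]
    simp only [LinearMap.smul_apply]
    rw [Finset.sum_apply]
    have step : ∀ S : OmegaFiber F n k G T,
        ((Φ (Pi.single T₀ 1) S) • (opL F n k G T (rho S) (Pi.single S' 1))) P
        = if S = aRmap F n k G T ((gam S')⁻¹) P then Φ (Pi.single T₀ 1) S else 0 := by
      intro S
      rw [Pi.smul_apply, opL_apply, Pi.single_apply, smul_eq_mul, mul_ite, mul_one, mul_zero]
      refine if_congr ?_ rfl rfl
      rw [OmegaFiber.ext_iff1, OmegaFiber.ext_iff1]
      have key : ((rho S : (Matrix (Fin k) (Fin k) F)ˣ) : Matrix (Fin k) (Fin k) F) * S'.1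
          = S.1 * ((gam S' : (Matrix (Fin n) (Fin n) F)ˣ) : Matrix (Fin n) (Fin n) F) := by
        rw [← hgam S', ← hrho S, Matrix.mul_assoc]
      show (((rho S : (Matrix (Fin k) (Fin k) F)ˣ)⁻¹ : (Matrix (Fin k) (Fin k) F)ˣ) :
          Matrix (Fin k) (Fin k) F) * P.1 = S'.1 ↔
        S.1 = P.1 * (((gam S' : (Matrix (Fin n) (Fin n) F)ˣ)⁻¹ : (Matrix (Fin n) (Fin n) F)ˣ) :
          Matrix (Fin n) (Fin n) F)
      constructor
      · intro h
        have h2 := (left_unit_cancel _ P.1 S'.1).1 h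
        rw [key] at h2
        exact ((right_unit_cancel _ P.1 S.1).2 h2).symm
      · intro h
        have h3 := (right_unit_cancel _ P.1 S.1).1 h.symm
        rw [← key] at h3
        exact (left_unit_cancel _ P.1 S'.1).2 h3
    rw [Finset.sum_congr rfl (fun S _ => step S)]
    rw [Finset.sum_ite_eq' Finset.univ (aRmap F n k G T ((gam S')⁻¹) P)
      (fun S => Φ (Pi.single T₀ 1) S)]
    simp
  constructor
  · apply le_antisymm
    · intro Φ hΦ
      have hΦ' : ∀ r, opL F n k G T r * Φ = Φ * opL F n k G T r := fun r =>
        (Subalgebra.mem_centralizer_iff ℂ).1 hΦ (opL F n k G T r)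
          (Algebra.subset_adjoin (s := Set.range (opL F n k G T)) ⟨r, rfl⟩)
      rw [hard1 Φ hΦ']
      exact Subalgebra.sum_mem _ fun S _ =>
        Subalgebra.smul_mem _ (Algebra.subset_adjoin (s := Set.range (opR F n k G T)) ⟨(gam S)⁻¹, rfl⟩) _
    · refine Algebra.adjoin_le ?_
      rintro x ⟨g, rfl⟩
      rw [SetLike.mem_coe, Subalgebra.mem_centralizer_iff]
      intro y hy
      refine Algebra.adjoin_induction ?_ ?_ ?_ ?_ hy
      · rintro z ⟨r, rfl⟩
        exact opLR_comm F n k G T r g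
      · intro c
        exact Algebra.commutes c _
      · intro a b ha hb hpa hpb
        rw [add_mul, mul_add, hpa, hpb]
      · intro a b ha hb hpa hpb
        rw [mul_assoc, hpb, ← mul_assoc, hpa, mul_assoc]
  · apply le_antisymm
    · intro Φ hΦ
      have hΦ' : ∀ g, opR F n k G T g * Φ = Φ * opR F n k G T g := fun g =>
        (Subalgebra.mem_centralizer_iff ℂ).1 hΦ (opR F n k G T g)
          (Algebra.subset_adjoin (s := Set.range (opR F n k G T)) ⟨g, rfl⟩)
      rw [hard2 Φ hΦ']
      exact Subalgebra.sum_mem _ fun S _ =>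
        Subalgebra.smul_mem _ (Algebra.subset_adjoin (s := Set.range (opL F n k G T)) ⟨rho S, rfl⟩) _
    · refine Algebra.adjoin_le ?_
      rintro x ⟨r, rfl⟩
      rw [SetLike.mem_coe, Subalgebra.mem_centralizer_iff]
      intro y hy
      refine Algebra.adjoin_induction ?_ ?_ ?_ ?_ hy
      · rintro z ⟨g, rfl⟩
        exact (opLR_comm F n k G T r g).symm
      · intro c
        exact Algebra.commutes c _
      · intro a b ha hb hpa hpb
        rw [add_mul, mul_add, hpa, hpb]
      · intro a b ha hb hpa hpb
        rw [mul_assoc, hpb, ← mul_assoc, hpa, mul_assoc]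
end
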